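/- Suppose a₁, a₂, c₁, c₂, c₃, c₄ > 0. If (u₁, u₂, v₁, v₂, v₃, v₄) ∈ ℝ⁶ is a constant equilibrium satisfying u₁ ≤ v₁ and u₂ ≥ v₄, then u₁ = (a₂c₃/D₂)(M₀+W₂), u₂ = M₀ − (a₂c₃/D₂)(M₀+W₂), v₁ = (c₂/(c₁+c₂))N₀ − ((a₁c₂(a₂+c₃+c₄)+a₁a₂c₃)/(D₂(c₁+c₂)))(M₀+W₂), v₂ = (c₁/(c₁+c₂))N₀ − ((a₁c₁(a₂+c₃+c₄)−a₁a₂c₃)/(D₂(c₁+c₂)))(M₀+W₂), v₃ = (a₁(a₂+c₄)/D₂)(M₀+W₂), v₄ = (a₁c₃/D₂)(M₀+W₂). In particular, there is at most one constant equilibrium with u₁ ≤ v₁ and u₂ ≥ v₄. -/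

import Mathlib

/-- A constant equilibrium of the conservative reaction-diffusion system. -/
def IsConstantEquilibrium (a1 a2 c1 c2 c3 c4 M0 N0 W1 W2 u1 u2 v1 v2 v3 v4 : ℝ) : Prop :=
  (-a1 * min u1 v1 + a2 * min u2 v4 = 0) ∧
  (a1 * min u1 v1 - a2 * min u2 v4 = 0) ∧
  (-a1 * min u1 v1 - c1 * v1 + c2 * v2 = 0) ∧
  (-c2 * v2 + c1 * v1 + a2 * min u2 v4 = 0) ∧
  (-c3 * v3 + c4 * v4 + a1 * min u1 v1 = 0) ∧
  (-a2 * min u2 v4 - c4 * v4 + c3 * v3 = 0) ∧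
  (u1 + u2 = M0) ∧ (v1 + v2 + v3 + v4 = N0) ∧
  (v1 + v2 - u1 = W1) ∧ (v3 + v4 - u2 = W2)

theorem equilibrium_Q2_unique (a1 a2 c1 c2 c3 c4 M0 N0 W1 W2 : ℝ)
    (ha1 : 0 < a1) (ha2 : 0 < a2) (hc1 : 0 < c1) (hc2 : 0 < c2)
    (hc3 : 0 < c3) (hc4 : 0 < c4)
    (D2 : ℝ)
    (hD2 : D2 = a1 * (a2 + c3 + c4) + a2 * c3)
    (u1 u2 v1 v2 v3 v4 : ℝ)
    (heq : IsConstantEquilibrium a1 a2 c1 c2 c3 c4 M0 N0 W1 W2 u1 u2 v1 v2 v3 v4)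
    (h1 : u1 ≤ v1) (h2 : u2 ≥ v4) :
    u1 = (a2 * c3 / D2) * (M0 + W2) ∧
    u2 = M0 - (a2 * c3 / D2) * (M0 + W2) ∧
    v1 = (c2 / (c1 + c2)) * N0 - ((a1 * c2 * (a2 + c3 + c4) + a1 * a2 * c3) / (D2 * (c1 + c2))) * (M0 + W2) ∧
    v2 = (c1 / (c1 + c2)) * N0 - ((a1 * c1 * (a2 + c3 + c4) - a1 * a2 * c3) / (D2 * (c1 + c2))) * (M0 + W2) ∧
    v3 = (a1 * (a2 + c4) / D2) * (M0 + W2) ∧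
    v4 = (a1 * c3 / D2) * (M0 + W2) := by
  obtain ⟨e1, e2, e3, e4, e5, e6, e7, e8, e9, e10⟩ := heq
  simp only [min_eq_left h1, min_eq_right h2] at e1 e3 e5
  have hD2pos : 0 < D2 := by rw [hD2]; positivity
  have hD2ne : D2 ≠ 0 := hD2pos.ne'
  have hc12 : c1 + c2 ≠ 0 := by positivity
  have T := M0 + W2
  have hv4 : D2 * v4 = a1 * c3 * (M0 + W2) := by
    rw [hD2]; linear_combination (a1 + c3) * e1 + a1 * e5 + a1 * c3 * e7 + a1 * c3 * e10
  have hu1 : D2 * u1 = a2 * c3 * (M0 + W2) := by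
    have h : a1 * (D2 * u1) = a1 * (a2 * c3 * (M0 + W2)) := by
      linear_combination a2 * hv4 - D2 * e1
    exact mul_left_cancel₀ ha1.ne' h
  have hv3 : D2 * v3 = a1 * (a2 + c4) * (M0 + W2) := by
    have h : c3 * (D2 * v3) = c3 * (a1 * (a2 + c4) * (M0 + W2)) := by
      linear_combination (a2 + c4) * hv4 - D2 * e5 - D2 * e1
    exact mul_left_cancel₀ hc3.ne' h
  have hv1 : D2 * (c1 + c2) * v1 =
      c2 * D2 * N0 - (a1 * c2 * (a2 + c3 + c4) + a1 * a2 * c3) * (M0 + W2) := by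
    linear_combination (-c2) * hv3 - c2 * hv4 - a1 * hu1 + D2 * c2 * e8 - D2 * e3
  have hv2 : D2 * (c1 + c2) * v2 =
      c1 * D2 * N0 - (a1 * c1 * (a2 + c3 + c4) - a1 * a2 * c3) * (M0 + W2) := by
    linear_combination (-c1) * hv3 - c1 * hv4 + a1 * hu1 + D2 * c1 * e8 + D2 * e3
  refine ⟨?_, ?_, ?_, ?_, ?_, ?_⟩
  · field_simp; linear_combination hu1
  · field_simp; linear_combination D2 * e7 - hu1
  · field_simp; linear_combination hv1
  · field_simp; linear_combination hv2
  · field_simp; linear_combination hv3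
  · field_simp; linear_combination hv4
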